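/- arXiv:1910.05661 — 7 statements merged into one kernel-verified Lean document; each statement's English description precedes it below -/
import Mathlib

section
/- Suppose that A, B, C form a 3-phase length s Golay sequence triad. Then A(i)·B(i)·C(i) = A(s−1−i)·B(s−1−i)·C(s−1−i) for each integer i satisfying 0 ≤ i < s. -/
open scoped BigOperators

/-- `ω = e^{2πi/3}`, a primitive cube root of unity. -/
noncomputable def ω : ℂ := Complex.exp (2 * Real.pi * Complex.I / 3)

lemma omega_prim : IsPrimitiveRoot ω 3 := by
  have h := Complex.isPrimitiveRoot_exp 3 (by norm_num)
  convert h using 2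
  simp only [ω, Nat.cast_ofNat]

lemma omega_ne_zero : ω ≠ 0 := Complex.exp_ne_zero _

lemma omega_im_pos : 0 < ω.im := by
  have h : (2 * (Real.pi:ℂ) * Complex.I / 3) = ((2 * Real.pi / 3 : ℝ) : ℂ) * Complex.I := by
    push_cast; ring
  rw [ω, h, Complex.exp_ofReal_mul_I_im]
  apply Real.sin_pos_of_pos_of_lt_pi
  · positivity
  · nlinarith [Real.pi_pos]

lemma omega_im_ne : ω.im ≠ 0 := ne_of_gt omega_im_pos

lemma omega_cube : ω ^ 3 = 1 := omega_prim.pow_eq_one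

lemma omega_ne_one : ω ≠ 1 := by
  intro hc
  have := omega_im_ne
  rw [hc] at this
  simp at this

lemma omega_sq_ne_one : ω ^ 2 ≠ 1 := by
  intro hc
  have h1 : ω * ω ^ 2 = ω ^ 3 := by ring
  rw [hc, omega_cube, mul_one] at h1
  exact omega_ne_one h1

lemma omega_sq_ne_omega : ω ^ 2 ≠ ω := by
  intro hc
  apply omega_ne_one
  have h : ω * ω = ω * 1 := by rw [mul_one]; linear_combination hc
  exact mul_left_cancel₀ omega_ne_zero h

lemma omega_sum : 1 + ω + ω ^ 2 = 0 := by
  have h : (ω - 1) * (ω ^ 2 + ω + 1) = ω ^ 3 - 1 := by ring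
  rw [omega_cube, sub_self] at h
  rcases mul_eq_zero.mp h with h1 | h2
  · exact absurd (by linear_combination h1) omega_ne_one
  · linear_combination h2

noncomputable def bOf (x : ℂ) : ℤ := if x = 1 then 0 else if x = ω then 1 else -1
noncomputable def aOf (x : ℂ) : ℤ := if x = 1 then 1 else if x = ω then 0 else -1

lemma mem_param {x : ℂ} (hx : x ∈ ({1, ω, ω ^ 2} : Set ℂ)) :
    x = (aOf x : ℂ) + (bOf x : ℂ) * ω ∧ x = ω ^ (bOf x) := by
  rcases hx with h | h | h
  · subst h; simp [aOf, bOf]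
  · subst h; simp [aOf, bOf, omega_ne_one]
  · rw [Set.mem_singleton_iff] at h
    subst h
    rw [aOf, bOf, if_neg omega_sq_ne_one, if_neg omega_sq_ne_omega,
        if_neg omega_sq_ne_one, if_neg omega_sq_ne_omega]
    constructor
    · push_cast; linear_combination omega_sum
    · rw [zpow_neg, zpow_one]
      exact eq_inv_of_mul_eq_one_left (by linear_combination omega_cube)

lemma zpow_sum_omega {ι : Type*} (S : Finset ι) (g : ι → ℤ) :
    ∏ k ∈ S, ω ^ g k = ω ^ (∑ k ∈ S, g k) := by
  induction S using Finset.cons_induction with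
  | empty => simp
  | cons k S hk ih => simp [Finset.prod_cons, Finset.sum_cons, ih, zpow_add₀ omega_ne_zero]

lemma sum_zero_prod_one {ι : Type*} (S : Finset ι) (t : ι → ℂ)
    (ht : ∀ k ∈ S, t k ∈ ({1, ω, ω ^ 2} : Set ℂ)) (hsum : ∑ k ∈ S, t k = 0) :
    ∏ k ∈ S, t k = 1 := by
  have hrepr : ∀ k ∈ S, t k = (aOf (t k) : ℂ) + (bOf (t k) : ℂ) * ω :=
    fun k hk => (mem_param (ht k hk)).1
  have hsum' : ((∑ k ∈ S, aOf (t k) : ℤ) : ℂ) + ((∑ k ∈ S, bOf (t k) : ℤ) : ℂ) * ω = 0 := by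
    have h2 : ∑ k ∈ S, ((aOf (t k) : ℂ) + (bOf (t k) : ℂ) * ω) = 0 := by
      rw [← Finset.sum_congr rfl hrepr]; exact hsum
    rw [Finset.sum_add_distrib, ← Finset.sum_mul] at h2
    push_cast
    exact h2
  set a : ℤ := ∑ k ∈ S, aOf (t k)
  set b : ℤ := ∑ k ∈ S, bOf (t k)
  have him : (b : ℝ) * ω.im = 0 := by
    have := congrArg Complex.im hsum'
    simpa using this
  have hb : b = 0 := by
    rcases mul_eq_zero.mp him with h | h
    · exact_mod_cast h
    · exact absurd h omega_im_ne
  calc ∏ k ∈ S, t k = ∏ k ∈ S, ω ^ (bOf (t k)) :=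
        Finset.prod_congr rfl fun k hk => (mem_param (ht k hk)).2
    _ = ω ^ b := zpow_sum_omega S _
    _ = 1 := by rw [hb, zpow_zero]

open ComplexConjugate

lemma omega_abs : ‖ω‖ = 1 := by
  have h : (2 * (Real.pi:ℂ) * Complex.I / 3) = ((2 * Real.pi / 3 : ℝ) : ℂ) * Complex.I := by
    push_cast; ring
  rw [ω, h, Complex.norm_exp_ofReal_mul_I]

lemma conj_omega : conj ω = ω⁻¹ := by
  have h : ω * conj ω = 1 := by
    rw [Complex.mul_conj, Complex.normSq_eq_norm_sq, omega_abs]; norm_num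
  exact eq_inv_of_mul_eq_one_left (by linear_combination h)

lemma conj_omega_zpow (k : ℤ) : conj (ω ^ k) = ω ^ (-k) := by
  rw [map_zpow₀, conj_omega, inv_zpow, ← zpow_neg]

lemma omega_zpow_mem (k : ℤ) : ω ^ k ∈ ({1, ω, ω ^ 2} : Set ℂ) := by
  have h3 : ω ^ (3:ℤ) = 1 := by exact_mod_cast omega_cube
  have key : ω ^ k = ω ^ (k % 3) := by
    conv_lhs => rw [← Int.emod_add_mul_ediv k 3]
    rw [zpow_add₀ omega_ne_zero, zpow_mul, h3, one_zpow, mul_one]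
  have h : k % 3 = 0 ∨ k % 3 = 1 ∨ k % 3 = 2 := by omega
  rcases h with h | h | h <;> rw [key, h]
  · left; exact zpow_zero ω
  · right; left; exact zpow_one ω
  · right; right; rw [Set.mem_singleton_iff, show (2:ℤ) = ((2:ℕ):ℤ) by norm_num, zpow_natCast]

lemma mem_mul {x y : ℂ} (hx : x ∈ ({1, ω, ω ^ 2} : Set ℂ))
    (hy : y ∈ ({1, ω, ω ^ 2} : Set ℂ)) : x * y ∈ ({1, ω, ω ^ 2} : Set ℂ) := by
  rw [(mem_param hx).2, (mem_param hy).2, ← zpow_add₀ omega_ne_zero]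
  exact omega_zpow_mem _

lemma mem_mul_conj {x y : ℂ} (hx : x ∈ ({1, ω, ω ^ 2} : Set ℂ))
    (hy : y ∈ ({1, ω, ω ^ 2} : Set ℂ)) : x * conj y ∈ ({1, ω, ω ^ 2} : Set ℂ) := by
  rw [(mem_param hx).2, (mem_param hy).2, conj_omega_zpow, ← zpow_add₀ omega_ne_zero]
  exact omega_zpow_mem _

lemma mem_mul_conj_self {x : ℂ} (hx : x ∈ ({1, ω, ω ^ 2} : Set ℂ)) : x * conj x = 1 := by
  rw [(mem_param hx).2, conj_omega_zpow, ← zpow_add₀ omega_ne_zero]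
  simp

/-- A length-`s` sequence: a function `ℤ → ℂ` vanishing outside `{0, …, s-1}`. -/
def IsLenSeq (s : ℕ) (A : ℤ → ℂ) : Prop :=
  ∀ i : ℤ, i < 0 ∨ (s : ℤ) ≤ i → A i = 0

/-- A 3-phase length-`s` sequence: a length-`s` sequence whose entries on
`{0, …, s-1}` lie in `{1, ω, ω²}`. -/
def IsThreePhaseSeq (s : ℕ) (A : ℤ → ℂ) : Prop :=
  IsLenSeq s A ∧ ∀ i : ℤ, 0 ≤ i → i < (s : ℤ) → A i ∈ ({1, ω, ω ^ 2} : Set ℂ)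

/-- Aperiodic autocorrelation function `C_A(u) = Σ_{i ∈ ℤ} A(i) conj(A(i+u))`. -/
noncomputable def aperCorr (A : ℤ → ℂ) (u : ℤ) : ℂ :=
  ∑' i : ℤ, A i * (starRingEnd ℂ) (A (i + u))

/-- Three 3-phase length-`s` sequences forming a 3-phase Golay sequence triad. -/
def GolaySeqTriad (s : ℕ) (A B C : ℤ → ℂ) : Prop :=
  IsThreePhaseSeq s A ∧ IsThreePhaseSeq s B ∧ IsThreePhaseSeq s C ∧
    ∀ u : ℤ, u ≠ 0 → aperCorr A u + aperCorr B u + aperCorr C u = 0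

lemma aperCorr_eq_sum {s : ℕ} {A : ℤ → ℂ} (hA : IsLenSeq s A) (u : ℤ) :
    aperCorr A u = ∑ i ∈ Finset.Icc 0 ((s:ℤ) - 1 - u), A i * conj (A (i + u)) := by
  apply tsum_eq_sum
  intro i hi
  rw [Finset.mem_Icc, not_and_or] at hi
  rcases hi with hc | hc
  · rw [hA i (Or.inl (by omega)), zero_mul]
  · rw [hA (i + u) (Or.inr (by omega)), map_zero, mul_zero]

/-- If `A, B, C` form a 3-phase length-`s` Golay sequence triad, then
`A(i)B(i)C(i) = A(s−1−i)B(s−1−i)C(s−1−i)` for `0 ≤ i < s`. -/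
theorem golay_triad_product_symmetry (s : ℕ) (A B C : ℤ → ℂ)
    (h : GolaySeqTriad s A B C) (i : ℤ) (hi0 : 0 ≤ i) (his : i < (s : ℤ)) :
    A i * B i * C i =
      A ((s : ℤ) - 1 - i) * B ((s : ℤ) - 1 - i) * C ((s : ℤ) - 1 - i) := by
  obtain ⟨⟨hAlen, hAval⟩, ⟨hBlen, hBval⟩, ⟨hClen, hCval⟩, hcorr⟩ := h
  obtain ⟨f, hf⟩ : ∃ f : ℤ → ℂ, f = fun k => A k * B k * C k := ⟨_, rfl⟩
  have hfmem : ∀ j : ℤ, 0 ≤ j → j < (s:ℤ) → f j ∈ ({1, ω, ω ^ 2} : Set ℂ) := by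
    intro j h1 h2
    simp only [hf]
    exact mem_mul (mem_mul (hAval j h1 h2) (hBval j h1 h2)) (hCval j h1 h2)
  have hP : ∀ j : ℤ, 0 ≤ j → j ≤ (s:ℤ) - 2 →
      ∏ k ∈ Finset.Icc (0:ℤ) j, (f k * conj (f ((s:ℤ) - 1 - k))) = 1 := by
    intro j hj0 hj2
    set u : ℤ := (s:ℤ) - 1 - j with hu
    have hu0 : u ≠ 0 := by omega
    have hcu := hcorr u hu0
    rw [aperCorr_eq_sum hAlen u, aperCorr_eq_sum hBlen u, aperCorr_eq_sum hClen u] at hcu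
    have hIcc : (s:ℤ) - 1 - u = j := by omega
    rw [hIcc] at hcu
    set S : Finset (ℤ × Fin 3) := Finset.Icc (0:ℤ) j ×ˢ Finset.univ with hS
    set t : ℤ × Fin 3 → ℂ :=
      fun p => (![A, B, C] p.2) p.1 * conj ((![A, B, C] p.2) (p.1 + u)) with ht
    have hsum : ∑ p ∈ S, t p = 0 := by
      rw [hS, Finset.sum_product]
      simp only [ht, Fin.sum_univ_three, Matrix.cons_val_zero, Matrix.cons_val_one,
        Matrix.head_cons, Matrix.cons_val_two, Matrix.tail_cons]
      rw [Finset.sum_add_distrib, Finset.sum_add_distrib]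
      exact hcu
    have hmem : ∀ p ∈ S, t p ∈ ({1, ω, ω ^ 2} : Set ℂ) := by
      rintro ⟨k, c⟩ hp
      rw [hS, Finset.mem_product, Finset.mem_Icc] at hp
      have h1a : 0 ≤ k := hp.1.1
      have h1b : k < (s:ℤ) := by omega
      have h2a : 0 ≤ k + u := by omega
      have h2b : k + u < (s:ℤ) := by omega
      fin_cases c
      · exact mem_mul_conj (hAval k h1a h1b) (hAval _ h2a h2b)
      · exact mem_mul_conj (hBval k h1a h1b) (hBval _ h2a h2b)
      · exact mem_mul_conj (hCval k h1a h1b) (hCval _ h2a h2b)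
    have hprod := sum_zero_prod_one S t hmem hsum
    rw [hS, Finset.prod_product] at hprod
    simp only [ht, Fin.prod_univ_three, Matrix.cons_val_zero, Matrix.cons_val_one,
      Matrix.head_cons, Matrix.cons_val_two, Matrix.tail_cons] at hprod
    have hre : ∏ k ∈ Finset.Icc (0:ℤ) j, (f k * conj (f (k + u))) = 1 := by
      rw [← hprod]
      apply Finset.prod_congr rfl
      intro k _
      simp only [hf, map_mul]
      ring
    rw [Finset.prod_mul_distrib] at hre ⊢
    rw [← hre]
    congr 1
    apply Finset.prod_nbij' (fun k => j - k) (fun k => j - k)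
    · intro a ha; rw [Finset.mem_Icc] at *; omega
    · intro a ha; rw [Finset.mem_Icc] at *; omega
    · intro a _; omega
    · intro a _; omega
    · intro a ha
      congr 2
      omega
  have hstep : ∀ j : ℤ, 0 ≤ j → j ≤ (s:ℤ) - 2 → f j * conj (f ((s:ℤ) - 1 - j)) = 1 := by
    intro j hj0 hj2
    by_cases hj : j = 0
    · subst hj
      have := hP 0 le_rfl hj2
      simpa using this
    · have hsplit : Finset.Icc (0:ℤ) j = insert j (Finset.Icc 0 (j - 1)) := by
        ext x
        simp only [Finset.mem_Icc, Finset.mem_insert]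
        omega
      have hPj := hP j hj0 hj2
      rw [hsplit, Finset.prod_insert (by rw [Finset.mem_Icc]; omega)] at hPj
      rw [hP (j - 1) (by omega) (by omega), mul_one] at hPj
      exact hPj
  have heq : ∀ j : ℤ, 0 ≤ j → j ≤ (s:ℤ) - 2 → f j = f ((s:ℤ) - 1 - j) := by
    intro j hj0 hj2
    have h1 := hstep j hj0 hj2
    have h2 : f ((s:ℤ) - 1 - j) * conj (f ((s:ℤ) - 1 - j)) = 1 :=
      mem_mul_conj_self (hfmem _ (by omega) (by omega))
    linear_combination f ((s:ℤ) - 1 - j) * h1 - f j * h2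
  have main : f i = f ((s:ℤ) - 1 - i) := by
    by_cases hcase : i ≤ (s:ℤ) - 2
    · exact heq i hi0 hcase
    · have hi1 : i = (s:ℤ) - 1 := by omega
      by_cases h1 : (s:ℤ) = 1
      · have : (s:ℤ) - 1 - i = i := by omega
        rw [this]
      · have h0 := heq 0 le_rfl (by omega)
        have e1 : (s:ℤ) - 1 - i = 0 := by omega
        have e2 : (s:ℤ) - 1 - 0 = i := by omega
        rw [e1, ← e2]
        exact h0.symm
  simpa only [hf] using main
end

section
/- Let A be a length 2n sequence of complex numbers. Then |Σ_{i=0}^{2n−1} (−1)^i A(i)|² = Σ_{u=0}^{2n−1} (−1)^u R_A(u), where R_A is the periodic autocorrelation function of A. -/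
open scoped BigOperators

/-- Periodic autocorrelation function
`R_A(u) = Σ_{i=0}^{s−1} A(i) conj(A((i+u) mod s))`. -/
noncomputable def perCorr (s : ℕ) (A : ℤ → ℂ) (u : ℤ) : ℂ :=
  ∑ i ∈ Finset.range s, A i * (starRingEnd ℂ) (A (((i : ℤ) + u) % (s : ℤ)))

/-- Three 3-phase length-`s` sequences forming a 3-phase periodic Golay sequence
triad. -/
def PeriodicGolaySeqTriad (s : ℕ) (A B C : ℤ → ℂ) : Prop :=
  IsThreePhaseSeq s A ∧ IsThreePhaseSeq s B ∧ IsThreePhaseSeq s C ∧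
    ∀ u : ℤ, 0 < u → u < (s : ℤ) →
      perCorr s A u + perCorr s B u + perCorr s C u = 0

lemma sum_range_shift_mod (s i : ℕ) (hs : 0 < s) (H : ℕ → ℂ) :
    ∑ u ∈ Finset.range s, H ((i + u) % s) = ∑ j ∈ Finset.range s, H j := by
  haveI : NeZero s := ⟨hs.ne'⟩
  rw [← Fin.sum_univ_eq_sum_range (fun u => H ((i + u) % s)),
    ← Fin.sum_univ_eq_sum_range H]
  have key : ∀ u : Fin s, H ((i + (u : ℕ)) % s) = H (((⟨i % s, Nat.mod_lt _ hs⟩ : Fin s) + u : Fin s) : ℕ) := by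
    intro u
    congr 1
    rw [Fin.val_add]
    simp [Nat.mod_add_mod]
  simp_rw [key]
  exact Equiv.sum_comp (Equiv.addLeft (⟨i % s, Nat.mod_lt _ hs⟩ : Fin s)) (fun v => H (v : ℕ))

lemma neg_one_pow_mod_even (n m : ℕ) (hn : 0 < n) :
    ((-1 : ℂ)) ^ (m % (2 * n)) = (-1 : ℂ) ^ m := by
  conv_rhs => rw [← Nat.div_add_mod m (2 * n)]
  rw [pow_add, pow_mul, pow_mul]
  norm_num

/-- For a length-`2n` sequence `A`,
`|Σ_{i=0}^{2n−1} (−1)^i A(i)|² = Σ_{u=0}^{2n−1} (−1)^u R_A(u)`. -/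
theorem alternating_sum_abs_sq_eq_alternating_perCorr_sum (n : ℕ) (A : ℤ → ℂ)
    (hA : IsLenSeq (2 * n) A) :
    ((‖∑ i ∈ Finset.range (2 * n), (-1 : ℂ) ^ i * A i‖ ^ 2 : ℝ) : ℂ) =
      ∑ u ∈ Finset.range (2 * n), (-1 : ℂ) ^ u * perCorr (2 * n) A u := by
  rcases Nat.eq_zero_or_pos n with rfl | hn
  · simp
  have hs : 0 < 2 * n := by omega
  have hmod : ∀ i u : ℕ,
      (((i : ℤ) + (u : ℤ)) % ((2 * n : ℕ) : ℤ)) = (((i + u) % (2 * n) : ℕ) : ℤ) := by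
    intro i u; push_cast; ring
  have hL : ((‖∑ i ∈ Finset.range (2 * n), (-1 : ℂ) ^ i * A i‖ ^ 2 : ℝ) : ℂ)
      = ∑ i ∈ Finset.range (2 * n), ∑ j ∈ Finset.range (2 * n),
          (-1 : ℂ) ^ i * (-1 : ℂ) ^ j * (A i * (starRingEnd ℂ) (A j)) := by
    rw [Complex.sq_norm, ← Complex.mul_conj, map_sum, Finset.sum_mul_sum]
    refine Finset.sum_congr rfl fun i _ => Finset.sum_congr rfl fun j _ => ?_
    rw [map_mul, map_pow, map_neg, map_one]; ring
  have hR : ∑ u ∈ Finset.range (2 * n), (-1 : ℂ) ^ u * perCorr (2 * n) A u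
      = ∑ i ∈ Finset.range (2 * n), ∑ u ∈ Finset.range (2 * n),
          (-1 : ℂ) ^ u * (A i * (starRingEnd ℂ) (A (((i + u) % (2 * n) : ℕ) : ℤ))) := by
    unfold perCorr
    simp_rw [Finset.mul_sum, hmod]
    exact Finset.sum_comm
  rw [hL, hR]
  refine Finset.sum_congr rfl fun i hi => ?_
  have := sum_range_shift_mod (2 * n) i hs
    (fun j => (-1 : ℂ) ^ i * (-1 : ℂ) ^ j * (A i * (starRingEnd ℂ) (A (j : ℤ))))
  rw [← this]
  refine Finset.sum_congr rfl fun u hu => ?_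
  have hsign : (-1 : ℂ) ^ i * (-1 : ℂ) ^ ((i + u) % (2 * n)) = (-1 : ℂ) ^ u := by
    rw [neg_one_pow_mod_even n (i + u) hn, pow_add, ← mul_assoc, ← pow_add]
    have h2 : (-1 : ℂ) ^ (i + i) = 1 := by
      rw [← two_mul, pow_mul]; norm_num
    rw [h2, one_mul]
  rw [hsign]
end

section
/- (Linear Offsets for array triads.) Suppose that (a_{i₁,…,i_r}), (b_{i₁,…,i_r}), (c_{i₁,…,i_r}) form an s₁ × ⋯ × s_r Golay array triad over ℤ₃, and let e₁, …, e_r ∈ ℤ₃. Then the arrays (a_{i₁,…,i_r} + e₁i₁ + ⋯ + e_r i_r), (b_{i₁,…,i_r} + e₁i₁ + ⋯ + e_r i_r), (c_{i₁,…,i_r} + e₁i₁ + ⋯ + e_r i_r) over ℤ₃ also form an s₁ × ⋯ × s_r Golay array triad over ℤ₃. -/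
open scoped BigOperators

/-- Aperiodic autocorrelation function of an `r`-dimensional array:
`C_A(u) = Σ_{i ∈ ℤ^r} A(i) conj(A(i+u))`. -/
noncomputable def aperCorrArr {r : ℕ} (A : (Fin r → ℤ) → ℂ) (u : Fin r → ℤ) : ℂ :=
  ∑' i : Fin r → ℤ, A i * (starRingEnd ℂ) (A (i + u))

/-- The 3-phase `s₁ × ⋯ × s_r` array corresponding to an array over `ℤ₃`:
`A(i) = ω^{a(i)}` when `0 ≤ i_k < s_k` for all `k`, and `0` otherwise. -/
noncomputable def toArr (r : ℕ) (s : Fin r → ℕ) (a : (Fin r → ℤ) → ZMod 3) :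
    (Fin r → ℤ) → ℂ :=
  fun i => if ∀ k, 0 ≤ i k ∧ i k < (s k : ℤ) then ω ^ (a i).val else 0

/-- Three `s₁ × ⋯ × s_r` arrays over `ℤ₃` forming a Golay array triad over
`ℤ₃`: their corresponding 3-phase arrays satisfy
`C_A(u) + C_B(u) + C_C(u) = 0` for all `u ≠ 0`. -/
def GolayArrTriadZ3 (r : ℕ) (s : Fin r → ℕ) (a b c : (Fin r → ℤ) → ZMod 3) : Prop :=
  ∀ u : Fin r → ℤ, u ≠ 0 →
    aperCorrArr (toArr r s a) u + aperCorrArr (toArr r s b) u +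
      aperCorrArr (toArr r s c) u = 0

lemma omega_mul_conj : ω * (starRingEnd ℂ) ω = 1 := by
  rw [ω, ← Complex.exp_conj, ← Complex.exp_add]
  have : (2 * ↑Real.pi * Complex.I / 3) + (starRingEnd ℂ) (2 * ↑Real.pi * Complex.I / 3) = 0 := by
    simp [map_div₀, map_mul, Complex.conj_I, map_ofNat]
    ring
  rw [this, Complex.exp_zero]

lemma omega_pow_mod (n : ℕ) : ω ^ (n % 3) = ω ^ n := by
  conv_rhs => rw [← Nat.div_add_mod n 3]
  rw [pow_add, pow_mul, omega_cube, one_pow, one_mul]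

lemma omega_pow_val_add (x y : ZMod 3) : ω ^ (x + y).val = ω ^ x.val * ω ^ y.val := by
  rw [ZMod.val_add, omega_pow_mod, pow_add]

lemma key_corr (r : ℕ) (s : Fin r → ℕ) (f : (Fin r → ℤ) → ZMod 3)
    (e : Fin r → ZMod 3) (u : Fin r → ℤ) :
    aperCorrArr (toArr r s (fun i => f i + ∑ k, e k * ((i k : ZMod 3)))) u
      = (starRingEnd ℂ) (ω ^ ((∑ k, e k * ((u k : ZMod 3))).val)) *
        aperCorrArr (toArr r s f) u := by
  unfold aperCorrArr
  rw [← tsum_mul_left]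
  apply tsum_congr
  intro i
  unfold toArr
  simp only []
  by_cases h1 : ∀ k, 0 ≤ i k ∧ i k < (s k : ℤ)
  · by_cases h2 : ∀ k, 0 ≤ (i + u) k ∧ (i + u) k < (s k : ℤ)
    · simp only [if_pos h1, if_pos h2]
      have hL : (∑ k, e k * (((i + u) k : ZMod 3))) =
          (∑ k, e k * ((i k : ZMod 3))) + (∑ k, e k * ((u k : ZMod 3))) := by
        rw [← Finset.sum_add_distrib]
        apply Finset.sum_congr rfl
        intro k _
        simp [Pi.add_apply, mul_add]
      rw [hL, omega_pow_val_add, omega_pow_val_add, omega_pow_val_add]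
      simp only [map_mul, map_pow]
      have hc : ω ^ (∑ k, e k * ((i k : ZMod 3))).val *
          ((starRingEnd ℂ) ω) ^ (∑ k, e k * ((i k : ZMod 3))).val = 1 := by
        rw [← mul_pow, omega_mul_conj, one_pow]
      linear_combination (ω ^ (f i).val * ((starRingEnd ℂ) ω) ^ (f (i + u)).val *
        ((starRingEnd ℂ) ω) ^ (∑ k, e k * ((u k : ZMod 3))).val) * hc
    · simp only [if_pos h1, if_neg h2, map_zero, mul_zero]
  · simp only [if_neg h1, zero_mul, mul_zero]

/-- (Linear Offsets.) If `a, b, c` form an `s₁ × ⋯ × s_r` Golay array triad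
over `ℤ₃`, then so do the arrays obtained by adding `e₁i₁ + ⋯ + e_r i_r`. -/
theorem golay_array_triad_linear_offset (r : ℕ) (s : Fin r → ℕ)
    (a b c : (Fin r → ℤ) → ZMod 3) (h : GolayArrTriadZ3 r s a b c)
    (e : Fin r → ZMod 3) :
    GolayArrTriadZ3 r s
      (fun i => a i + ∑ k, e k * ((i k : ZMod 3)))
      (fun i => b i + ∑ k, e k * ((i k : ZMod 3)))
      (fun i => c i + ∑ k, e k * ((i k : ZMod 3))) := by
  intro u hu
  rw [key_corr, key_corr, key_corr, ← mul_add, ← mul_add, h u hu, mul_zero]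
end

section
/- Let A be a 3-phase s₁ × ⋯ × s_r array, where r ≥ 2. Then for all integers u₁, …, u_r with 0 ≤ u₁ < s₁, the aperiodic autocorrelation of the projection ψ_{1,2}(A) satisfies C_{ψ_{1,2}(A)}(u₁ + s₁u₂, u₃, …, u_r) = C_A(u₁, u₂, u₃, …, u_r) + C_A(u₁ − s₁, u₂ + 1, u₃, …, u_r). -/
open scoped BigOperators

/-- An `s₁ × s₂ × s₃ × ⋯ × s_{r+2}` array (with the first two dimensions
displayed explicitly): vanishes whenever some index is out of range. -/
def IsArr2R (s₁ s₂ : ℕ) {r : ℕ} (s : Fin r → ℕ)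
    (A : ℤ → ℤ → (Fin r → ℤ) → ℂ) : Prop :=
  ∀ (i₁ i₂ : ℤ) (i : Fin r → ℤ),
    ((i₁ < 0 ∨ (s₁ : ℤ) ≤ i₁) ∨ (i₂ < 0 ∨ (s₂ : ℤ) ≤ i₂) ∨
      ∃ k, i k < 0 ∨ (s k : ℤ) ≤ i k) → A i₁ i₂ i = 0

/-- A 3-phase `s₁ × s₂ × s₃ × ⋯ × s_{r+2}` array: entries inside the index
range lie in `{1, ω, ω²}`. -/
def IsThreePhase2R (s₁ s₂ : ℕ) {r : ℕ} (s : Fin r → ℕ)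
    (A : ℤ → ℤ → (Fin r → ℤ) → ℂ) : Prop :=
  IsArr2R s₁ s₂ s A ∧
    ∀ (i₁ i₂ : ℤ) (i : Fin r → ℤ), 0 ≤ i₁ → i₁ < (s₁ : ℤ) → 0 ≤ i₂ →
      i₂ < (s₂ : ℤ) → (∀ k, 0 ≤ i k ∧ i k < (s k : ℤ)) →
      A i₁ i₂ i ∈ ({1, ω, ω ^ 2} : Set ℂ)

/-- Aperiodic autocorrelation of an array with two explicit leading
dimensions. -/
noncomputable def aperCorr2R {r : ℕ} (A : ℤ → ℤ → (Fin r → ℤ) → ℂ)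
    (u₁ u₂ : ℤ) (u : Fin r → ℤ) : ℂ :=
  ∑' p : ℤ × ℤ × (Fin r → ℤ),
    A p.1 p.2.1 p.2.2 * (starRingEnd ℂ) (A (p.1 + u₁) (p.2.1 + u₂) (p.2.2 + u))

/-- A `t × s₁ × ⋯ × s_r` array (with the first dimension displayed
explicitly): vanishes whenever some index is out of range. -/
def IsArr1R (t : ℕ) {r : ℕ} (s : Fin r → ℕ) (B : ℤ → (Fin r → ℤ) → ℂ) : Prop :=
  ∀ (i₀ : ℤ) (i : Fin r → ℤ),
    ((i₀ < 0 ∨ (t : ℤ) ≤ i₀) ∨ ∃ k, i k < 0 ∨ (s k : ℤ) ≤ i k) → B i₀ i = 0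

/-- A 3-phase `t × s₁ × ⋯ × s_r` array. -/
def IsThreePhase1R (t : ℕ) {r : ℕ} (s : Fin r → ℕ)
    (B : ℤ → (Fin r → ℤ) → ℂ) : Prop :=
  IsArr1R t s B ∧
    ∀ (i₀ : ℤ) (i : Fin r → ℤ), 0 ≤ i₀ → i₀ < (t : ℤ) →
      (∀ k, 0 ≤ i k ∧ i k < (s k : ℤ)) → B i₀ i ∈ ({1, ω, ω ^ 2} : Set ℂ)

/-- Aperiodic autocorrelation of an array with one explicit leading
dimension. -/
noncomputable def aperCorr1R {r : ℕ} (B : ℤ → (Fin r → ℤ) → ℂ)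
    (u₀ : ℤ) (u : Fin r → ℤ) : ℂ :=
  ∑' p : ℤ × (Fin r → ℤ),
    B p.1 p.2 * (starRingEnd ℂ) (B (p.1 + u₀) (p.2 + u))

/-- Three 3-phase arrays (two explicit leading dimensions) forming a 3-phase
Golay array triad. -/
def GolayTriad2R (s₁ s₂ : ℕ) {r : ℕ} (s : Fin r → ℕ)
    (A B C : ℤ → ℤ → (Fin r → ℤ) → ℂ) : Prop :=
  IsThreePhase2R s₁ s₂ s A ∧ IsThreePhase2R s₁ s₂ s B ∧ IsThreePhase2R s₁ s₂ s C ∧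
    ∀ (u₁ u₂ : ℤ) (u : Fin r → ℤ), ¬ (u₁ = 0 ∧ u₂ = 0 ∧ u = 0) →
      aperCorr2R A u₁ u₂ u + aperCorr2R B u₁ u₂ u + aperCorr2R C u₁ u₂ u = 0

/-- Three 3-phase arrays (one explicit leading dimension) forming a 3-phase
Golay array triad. -/
def GolayTriad1R (t : ℕ) {r : ℕ} (s : Fin r → ℕ)
    (A B C : ℤ → (Fin r → ℤ) → ℂ) : Prop :=
  IsThreePhase1R t s A ∧ IsThreePhase1R t s B ∧ IsThreePhase1R t s C ∧
    ∀ (u₀ : ℤ) (u : Fin r → ℤ), ¬ (u₀ = 0 ∧ u = 0) →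
      aperCorr1R A u₀ u + aperCorr1R B u₀ u + aperCorr1R C u₀ u = 0

/-- The projection `ψ_{1,2}`: joins the first dimension (of size `s₁`) to the
second, via `B(i₁ + s₁ i₂, i) = A(i₁, i₂, i)` for `0 ≤ i₁ < s₁`,
`0 ≤ i₂ < s₂`, and zero outside the index ranges. -/
noncomputable def proj12 (s₁ s₂ : ℕ) {r : ℕ}
    (A : ℤ → ℤ → (Fin r → ℤ) → ℂ) : ℤ → (Fin r → ℤ) → ℂ :=
  fun j i =>
    if 0 ≤ j ∧ j < (s₁ : ℤ) * (s₂ : ℤ) then A (j % (s₁ : ℤ)) (j / (s₁ : ℤ)) i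
    else 0

/-- For a 3-phase array `A` (with at least two dimensions) and `0 ≤ u₁ < s₁`,
`C_{ψ₁,₂(A)}(u₁ + s₁u₂, u₃, …) = C_A(u₁, u₂, u₃, …) + C_A(u₁ − s₁, u₂ + 1, u₃, …)`. -/
theorem proj12_aperCorr (s₁ s₂ : ℕ) (r : ℕ) (s : Fin r → ℕ)
    (A : ℤ → ℤ → (Fin r → ℤ) → ℂ) (hA : IsThreePhase2R s₁ s₂ s A)
    (u₁ : ℤ) (hu₁0 : 0 ≤ u₁) (hu₁s : u₁ < (s₁ : ℤ)) (u₂ : ℤ) (u : Fin r → ℤ) :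
    aperCorr1R (proj12 s₁ s₂ A) (u₁ + (s₁ : ℤ) * u₂) u =
      aperCorr2R A u₁ u₂ u + aperCorr2R A (u₁ - (s₁ : ℤ)) (u₂ + 1) u := by
  have hs₁ : (0:ℤ) < (s₁:ℤ) := lt_of_le_of_lt hu₁0 hu₁s
  have hs₁' : (s₁:ℤ) ≠ 0 := hs₁.ne'
  obtain ⟨hz, -⟩ := hA
  have hproj : ∀ (j : ℤ) (i : Fin r → ℤ),
      proj12 s₁ s₂ A j i = A (j % (s₁:ℤ)) (j / (s₁:ℤ)) i := by
    intro j i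
    unfold proj12
    split_ifs with h
    · rfl
    · rcases not_and_or.mp h with h | h
      · push_neg at h
        exact (hz _ _ _ (Or.inr (Or.inl (Or.inl (Int.ediv_neg_of_neg_of_pos h hs₁))))).symm
      · push_neg at h
        refine (hz _ _ _ (Or.inr (Or.inl (Or.inr ?_)))).symm
        rw [Int.le_ediv_iff_mul_le hs₁, mul_comm]
        exact h
  set f : ℤ × (Fin r → ℤ) → ℤ × ℤ × (Fin r → ℤ) :=
    fun p => (p.1 % (s₁:ℤ), p.1 / (s₁:ℤ), p.2) with hf
  set g : ℤ × ℤ × (Fin r → ℤ) → ℂ := fun q =>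
    A q.1 q.2.1 q.2.2 * (starRingEnd ℂ) (A (q.1 + u₁) (q.2.1 + u₂) (q.2.2 + u)) +
    A q.1 q.2.1 q.2.2 *
      (starRingEnd ℂ) (A (q.1 + (u₁ - (s₁:ℤ))) (q.2.1 + (u₂ + 1)) (q.2.2 + u)) with hg
  have hinj : Function.Injective f := by
    rintro ⟨j, i⟩ ⟨j', i'⟩ h
    simp only [hf, Prod.mk.injEq] at h
    obtain ⟨h1, h2, h3⟩ := h
    have hj : j = j' := by
      have e1 := Int.mul_ediv_add_emod j (s₁:ℤ)
      have e2 := Int.mul_ediv_add_emod j' (s₁:ℤ)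
      rw [← e1, ← e2, h1, h2]
    rw [hj, h3]
  have hrange : Function.support g ⊆ Set.range f := by
    rintro ⟨x, y, i⟩ hq
    have hAx : A x y i ≠ 0 := by
      intro h0
      apply hq
      simp [hg, h0]
    have hx0 : 0 ≤ x ∧ x < (s₁:ℤ) := by
      by_contra hx
      exact hAx (hz _ _ _ (Or.inl (by omega)))
    refine ⟨(x + (s₁:ℤ) * y, i), ?_⟩
    simp only [hf]
    have h1 : (x + (s₁:ℤ) * y) % (s₁:ℤ) = x := by
      rw [Int.add_mul_emod_self_left, Int.emod_eq_of_lt hx0.1 hx0.2]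
    have h2 : (x + (s₁:ℤ) * y) / (s₁:ℤ) = y := by
      rw [Int.add_mul_ediv_left x y hs₁', Int.ediv_eq_zero_of_lt hx0.1 hx0.2, zero_add]
    rw [h1, h2]
  have hpt : ∀ p : ℤ × (Fin r → ℤ),
      proj12 s₁ s₂ A p.1 p.2 *
        (starRingEnd ℂ) (proj12 s₁ s₂ A (p.1 + (u₁ + (s₁:ℤ) * u₂)) (p.2 + u)) = g (f p) := by
    rintro ⟨j, i⟩
    simp only [hf, hg]
    rw [hproj, hproj]
    set a := j % (s₁:ℤ) with ha
    set b := j / (s₁:ℤ) with hb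
    have ha0 : 0 ≤ a := Int.emod_nonneg j hs₁'
    have ha1 : a < (s₁:ℤ) := Int.emod_lt_of_pos j hs₁
    have hj : j = (s₁:ℤ) * b + a := by
      rw [ha, hb]; exact (Int.mul_ediv_add_emod j (s₁:ℤ)).symm
    by_cases hcase : a + u₁ < (s₁:ℤ)
    · have hrw : j + (u₁ + (s₁:ℤ) * u₂) = (a + u₁) + (s₁:ℤ) * (b + u₂) := by
        rw [hj]; ring
      rw [hrw, Int.add_mul_emod_self_left, Int.emod_eq_of_lt (by omega) hcase,
        Int.add_mul_ediv_left _ _ hs₁', Int.ediv_eq_zero_of_lt (by omega) hcase, zero_add]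
      have h0 : A (a + (u₁ - (s₁:ℤ))) (b + (u₂ + 1)) (i + u) = 0 := by
        apply hz; left; omega
      rw [h0]
      simp
    · push_neg at hcase
      have hrw : j + (u₁ + (s₁:ℤ) * u₂) = (a + u₁ - (s₁:ℤ)) + (s₁:ℤ) * (b + u₂ + 1) := by
        rw [hj]; ring
      rw [hrw, Int.add_mul_emod_self_left, Int.emod_eq_of_lt (by omega) (by omega),
        Int.add_mul_ediv_left _ _ hs₁', Int.ediv_eq_zero_of_lt (by omega) (by omega), zero_add]
      have h0 : A (a + u₁) (b + u₂) (i + u) = 0 := by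
        apply hz; left; omega
      have e1 : a + u₁ - (s₁:ℤ) = a + (u₁ - (s₁:ℤ)) := by ring
      have e2 : b + u₂ + 1 = b + (u₂ + 1) := by ring
      rw [h0, e1, e2]
      simp
  set S : Finset (ℤ × ℤ × (Fin r → ℤ)) :=
    (Finset.Ico (0:ℤ) (s₁:ℤ)) ×ˢ (Finset.Ico (0:ℤ) (s₂:ℤ)) ×ˢ
      (Fintype.piFinset fun k => Finset.Ico (0:ℤ) ((s k : ℤ))) with hS
  have hsupp : ∀ (v₁ v₂ : ℤ) (v : Fin r → ℤ), ∀ q ∉ S,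
      A q.1 q.2.1 q.2.2 * (starRingEnd ℂ) (A (q.1 + v₁) (q.2.1 + v₂) (q.2.2 + v)) = 0 := by
    rintro v₁ v₂ v ⟨x, y, i⟩ hq
    have h0 : A x y i = 0 := by
      apply hz
      by_contra hcon
      push_neg at hcon
      apply hq
      simp only [hS, Finset.mem_product, Finset.mem_Ico, Fintype.mem_piFinset]
      obtain ⟨⟨p1, p2⟩, ⟨p3, p4⟩, p5⟩ := hcon
      refine ⟨⟨by omega, by omega⟩, ⟨by omega, by omega⟩, fun k => ?_⟩
      have := p5 k
      constructor <;> omega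
    simp [h0]
  have hsum1 : Summable (fun q : ℤ × ℤ × (Fin r → ℤ) =>
      A q.1 q.2.1 q.2.2 * (starRingEnd ℂ) (A (q.1 + u₁) (q.2.1 + u₂) (q.2.2 + u))) :=
    summable_of_ne_finset_zero (s := S) (hsupp u₁ u₂ u)
  have hsum2 : Summable (fun q : ℤ × ℤ × (Fin r → ℤ) =>
      A q.1 q.2.1 q.2.2 *
        (starRingEnd ℂ) (A (q.1 + (u₁ - (s₁:ℤ))) (q.2.1 + (u₂ + 1)) (q.2.2 + u))) :=
    summable_of_ne_finset_zero (s := S) (hsupp _ _ _)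
  calc aperCorr1R (proj12 s₁ s₂ A) (u₁ + (s₁:ℤ) * u₂) u
      = ∑' p : ℤ × (Fin r → ℤ), g (f p) := tsum_congr hpt
    _ = ∑' q : ℤ × ℤ × (Fin r → ℤ), g q := hinj.tsum_eq hrange
    _ = aperCorr2R A u₁ u₂ u + aperCorr2R A (u₁ - (s₁:ℤ)) (u₂ + 1) u := by
        simp only [hg]
        exact Summable.tsum_add hsum1 hsum2
end

section
/- (Projection mapping.) Suppose that A, B, C form a 3-phase s₁ × ⋯ × s_r Golay array triad, where r ≥ 2. Then ψ_{1,2}(A), ψ_{1,2}(B), ψ_{1,2}(C) form a 3-phase s₁s₂ × s₃ × ⋯ × s_r Golay array triad. -/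
open scoped BigOperators

section Aux

variable {r : ℕ}

private lemma proj12_eq_of_arr (s₁ s₂ : ℕ) (hs₁ : 0 < (s₁ : ℤ)) {s : Fin r → ℕ}
    {X : ℤ → ℤ → (Fin r → ℤ) → ℂ} (hX : IsArr2R s₁ s₂ s X) (j : ℤ) (i : Fin r → ℤ) :
    proj12 s₁ s₂ X j i = X (j % (s₁ : ℤ)) (j / (s₁ : ℤ)) i := by
  unfold proj12
  split_ifs with hj
  · rfl
  · symm
    push_neg at hj
    by_cases h0 : 0 ≤ j
    · exact hX _ _ _ (Or.inr (Or.inl (Or.inr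
        ((Int.le_ediv_iff_mul_le hs₁).mpr (by have := hj h0; linarith)))))
    · exact hX _ _ _ (Or.inr (Or.inl (Or.inl
        (Int.ediv_neg_of_neg_of_pos (lt_of_not_ge h0) hs₁))))

private lemma proj12_threePhase (s₁ s₂ : ℕ) {s : Fin r → ℕ}
    {X : ℤ → ℤ → (Fin r → ℤ) → ℂ} (hX : IsThreePhase2R s₁ s₂ s X) :
    IsThreePhase1R (s₁ * s₂) s (proj12 s₁ s₂ X) := by
  constructor
  · intro j i hcond
    unfold proj12
    split_ifs with hj
    · rcases hcond with (h | h) | h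
      · exact absurd hj.1 (not_le.mpr h)
      · exact absurd hj.2 (not_lt.mpr (by push_cast at h ⊢; linarith))
      · exact hX.1 _ _ _ (Or.inr (Or.inr h))
    · rfl
  · intro j i hj0 hjt hik
    have hjt' : j < (s₁ : ℤ) * (s₂ : ℤ) := by push_cast at hjt; linarith
    have hs₁ : 0 < (s₁ : ℤ) := by
      by_contra hc
      have : (s₁ : ℤ) = 0 := le_antisymm (not_lt.mp hc) (Int.ofNat_nonneg s₁)
      simp [this] at hjt'; omega
    have hs₂ : 0 < (s₂ : ℤ) := by nlinarith
    unfold proj12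
    rw [if_pos ⟨hj0, hjt'⟩]
    exact hX.2 _ _ _ (Int.emod_nonneg j (ne_of_gt hs₁)) (Int.emod_lt_of_pos j hs₁)
      (Int.ediv_nonneg hj0 (le_of_lt hs₁))
      ((Int.ediv_lt_iff_lt_mul hs₁).mpr (by linarith [hjt'])) hik

private lemma corr_decomp (s₁ s₂ : ℕ) (hs₁ : 0 < (s₁ : ℤ)) {s : Fin r → ℕ}
    {X : ℤ → ℤ → (Fin r → ℤ) → ℂ} (hX : IsArr2R s₁ s₂ s X) (u₀ : ℤ) (u : Fin r → ℤ) :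
    aperCorr1R (proj12 s₁ s₂ X) u₀ u
      = aperCorr2R X (u₀ % (s₁ : ℤ)) (u₀ / (s₁ : ℤ)) u
        + aperCorr2R X (u₀ % (s₁ : ℤ) - (s₁ : ℤ)) (u₀ / (s₁ : ℤ) + 1) u := by
  set a := u₀ % (s₁ : ℤ) with ha
  set b := u₀ / (s₁ : ℤ) with hb
  have ha0 : 0 ≤ a := Int.emod_nonneg u₀ (ne_of_gt hs₁)
  have ha1 : a < (s₁ : ℤ) := Int.emod_lt_of_pos u₀ hs₁
  -- pointwise decomposition
  have key : ∀ (j : ℤ) (i : Fin r → ℤ),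
      X (j % (s₁:ℤ)) (j / (s₁:ℤ)) i
        * (starRingEnd ℂ) (X ((j+u₀) % (s₁:ℤ)) ((j+u₀) / (s₁:ℤ)) (i+u))
      = X (j % (s₁:ℤ)) (j / (s₁:ℤ)) i
          * (starRingEnd ℂ) (X (j % (s₁:ℤ) + a) (j / (s₁:ℤ) + b) (i+u))
        + X (j % (s₁:ℤ)) (j / (s₁:ℤ)) i
          * (starRingEnd ℂ) (X (j % (s₁:ℤ) + (a - (s₁:ℤ))) (j / (s₁:ℤ) + (b + 1)) (i+u)) := by
    intro j i
    have hm0 : 0 ≤ j % (s₁:ℤ) := Int.emod_nonneg j (ne_of_gt hs₁)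
    have hm1 : j % (s₁:ℤ) < (s₁:ℤ) := Int.emod_lt_of_pos j hs₁
    have hdecomp : j + u₀ = (j % (s₁:ℤ) + a) + (s₁:ℤ) * (j / (s₁:ℤ) + b) := by
      have h1 := Int.mul_ediv_add_emod j (s₁:ℤ)
      have h2 := Int.mul_ediv_add_emod u₀ (s₁:ℤ)
      rw [ha, hb]; linarith
    by_cases hc : j % (s₁:ℤ) + a < (s₁:ℤ)
    · have hmod : (j+u₀) % (s₁:ℤ) = j % (s₁:ℤ) + a := by
        rw [hdecomp, Int.add_mul_emod_self_left, Int.emod_eq_of_lt (by linarith) hc]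
      have hdiv : (j+u₀) / (s₁:ℤ) = j / (s₁:ℤ) + b := by
        rw [hdecomp, Int.add_mul_ediv_left _ _ (ne_of_gt hs₁),
          Int.ediv_eq_zero_of_lt (by linarith) hc, zero_add]
      have hz : X (j % (s₁:ℤ) + (a - (s₁:ℤ))) (j / (s₁:ℤ) + (b + 1)) (i+u) = 0 :=
        hX _ _ _ (Or.inl (Or.inl (by linarith)))
      rw [hmod, hdiv, hz]
      simp
    · push_neg at hc
      have hde : j % (s₁:ℤ) + a = (j % (s₁:ℤ) + a - (s₁:ℤ)) + (s₁:ℤ) * 1 := by ring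
      have hmod : (j+u₀) % (s₁:ℤ) = j % (s₁:ℤ) + (a - (s₁:ℤ)) := by
        rw [hdecomp, Int.add_mul_emod_self_left]
        conv_lhs => rw [hde]
        rw [Int.add_mul_emod_self_left,
          Int.emod_eq_of_lt (by linarith) (by linarith)]
        ring
      have hdiv : (j+u₀) / (s₁:ℤ) = j / (s₁:ℤ) + (b + 1) := by
        rw [hdecomp, Int.add_mul_ediv_left _ _ (ne_of_gt hs₁)]
        conv_lhs => rw [hde]
        rw [Int.add_mul_ediv_left _ _ (ne_of_gt hs₁),
          Int.ediv_eq_zero_of_lt (by linarith) (by linarith)]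
        ring
      have hz : X (j % (s₁:ℤ) + a) (j / (s₁:ℤ) + b) (i+u) = 0 :=
        hX _ _ _ (Or.inl (Or.inr hc))
      rw [hmod, hdiv, hz]
      simp
  -- finite boxes
  classical
  set BV : Finset (Fin r → ℤ) := Fintype.piFinset fun k => Finset.Icc (0:ℤ) ((s k : ℤ) - 1)
  set Box1 : Finset (ℤ × (Fin r → ℤ)) := Finset.Icc 0 ((s₁:ℤ) * (s₂:ℤ) - 1) ×ˢ BV
  set Box2 : Finset (ℤ × ℤ × (Fin r → ℤ)) :=
    Finset.Icc 0 ((s₁:ℤ) - 1) ×ˢ (Finset.Icc 0 ((s₂:ℤ) - 1) ×ˢ BV)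
  have hBV : ∀ (i : Fin r → ℤ), (∀ k, 0 ≤ i k ∧ i k < (s k : ℤ)) → i ∈ BV := by
    intro i hi
    rw [Fintype.mem_piFinset]
    intro k
    rw [Finset.mem_Icc]
    exact ⟨(hi k).1, by linarith [(hi k).2]⟩
  -- support facts
  have hsup2 : ∀ (v₁ v₂ : ℤ) (w : Fin r → ℤ) (p : ℤ × ℤ × (Fin r → ℤ)), p ∉ Box2 →
      X p.1 p.2.1 p.2.2 * (starRingEnd ℂ) (X (p.1+v₁) (p.2.1+v₂) (p.2.2+w)) = 0 := by
    intro v₁ v₂ w p hp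
    rcases p with ⟨i₁, i₂, i⟩
    by_contra hne
    apply hp
    have h1 : X i₁ i₂ i ≠ 0 := fun h => hne (by simp [h])
    have h2 := mt (hX i₁ i₂ i) h1
    push_neg at h2
    obtain ⟨⟨hi₁0, hi₁1⟩, ⟨hi₂0, hi₂1⟩, hik⟩ := h2
    simp only [Box2, Finset.mem_product, Finset.mem_Icc]
    exact ⟨⟨hi₁0, by linarith⟩, ⟨hi₂0, by linarith⟩, hBV i hik⟩
  have t2 : ∀ (v₁ v₂ : ℤ), aperCorr2R X v₁ v₂ u
      = ∑ p ∈ Box2, X p.1 p.2.1 p.2.2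
          * (starRingEnd ℂ) (X (p.1+v₁) (p.2.1+v₂) (p.2.2+u)) := by
    intro v₁ v₂
    exact tsum_eq_sum (fun p hp => hsup2 v₁ v₂ u p hp)
  have t1 : aperCorr1R (proj12 s₁ s₂ X) u₀ u
      = ∑ p ∈ Box1, X (p.1 % (s₁:ℤ)) (p.1 / (s₁:ℤ)) p.2
          * (starRingEnd ℂ) (X ((p.1+u₀) % (s₁:ℤ)) ((p.1+u₀) / (s₁:ℤ)) (p.2+u)) := by
    unfold aperCorr1R
    have : ∀ p : ℤ × (Fin r → ℤ),
        proj12 s₁ s₂ X p.1 p.2 * (starRingEnd ℂ) (proj12 s₁ s₂ X (p.1+u₀) (p.2+u))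
        = X (p.1 % (s₁:ℤ)) (p.1 / (s₁:ℤ)) p.2
            * (starRingEnd ℂ) (X ((p.1+u₀) % (s₁:ℤ)) ((p.1+u₀) / (s₁:ℤ)) (p.2+u)) := by
      intro p
      rw [proj12_eq_of_arr s₁ s₂ hs₁ hX, proj12_eq_of_arr s₁ s₂ hs₁ hX]
    rw [tsum_congr this]
    apply tsum_eq_sum
    intro p hp
    rcases p with ⟨j, i⟩
    by_contra hne
    apply hp
    have h1 : X (j % (s₁:ℤ)) (j / (s₁:ℤ)) i ≠ 0 := fun h => hne (by simp [h])
    have h2 := mt (hX _ _ _) h1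
    push_neg at h2
    obtain ⟨⟨hi₁0, hi₁1⟩, ⟨hi₂0, hi₂1⟩, hik⟩ := h2
    simp only [Box1, Finset.mem_product, Finset.mem_Icc]
    refine ⟨⟨?_, ?_⟩, hBV i hik⟩
    · have := Int.mul_ediv_add_emod j (s₁:ℤ); nlinarith
    · have := Int.mul_ediv_add_emod j (s₁:ℤ); nlinarith
  rw [t1, t2, t2, ← Finset.sum_add_distrib]
  apply Finset.sum_nbij' (fun p => (p.1 % (s₁:ℤ), p.1 / (s₁:ℤ), p.2))
    (fun q => (q.1 + (s₁:ℤ) * q.2.1, q.2.2))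
  · rintro ⟨j, i⟩ hp
    simp only [Box1, Box2, Finset.mem_product, Finset.mem_Icc] at hp ⊢
    obtain ⟨⟨hj0, hj1⟩, hi⟩ := hp
    have hs₂' : 0 ≤ (s₂:ℤ) := Int.ofNat_nonneg s₂
    refine ⟨⟨Int.emod_nonneg j (ne_of_gt hs₁), by linarith [Int.emod_lt_of_pos j hs₁]⟩,
      ⟨Int.ediv_nonneg hj0 (le_of_lt hs₁), ?_⟩, hi⟩
    have : j / (s₁:ℤ) < (s₂:ℤ) := (Int.ediv_lt_iff_lt_mul hs₁).mpr (by linarith)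
    linarith
  · rintro ⟨i₁, i₂, i⟩ hq
    simp only [Box1, Box2, Finset.mem_product, Finset.mem_Icc] at hq ⊢
    obtain ⟨⟨h10, h11⟩, ⟨h20, h21⟩, hi⟩ := hq
    refine ⟨⟨by positivity, ?_⟩, hi⟩
    nlinarith
  · rintro ⟨j, i⟩ _
    have hj : j % (s₁:ℤ) + (s₁:ℤ) * (j / (s₁:ℤ)) = j := by
      linarith [Int.mul_ediv_add_emod j (s₁:ℤ)]
    simp [hj]
  · rintro ⟨i₁, i₂, i⟩ hq
    simp only [Box1, Box2, Finset.mem_product, Finset.mem_Icc] at hq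
    obtain ⟨⟨h10, h11⟩, ⟨h20, h21⟩, hi⟩ := hq
    have hmod : (i₁ + (s₁:ℤ) * i₂) % (s₁:ℤ) = i₁ := by
      rw [Int.add_mul_emod_self_left, Int.emod_eq_of_lt h10 (by linarith)]
    have hdiv : (i₁ + (s₁:ℤ) * i₂) / (s₁:ℤ) = i₂ := by
      rw [Int.add_mul_ediv_left _ _ (ne_of_gt hs₁),
        Int.ediv_eq_zero_of_lt h10 (by linarith), zero_add]
    simp [hmod, hdiv]
  · rintro ⟨j, i⟩ _
    exact key j i

end Aux

/-- (Projection mapping.) If `A, B, C` form a 3-phase `s₁ × s₂ × s₃ × ⋯ × s_{r+2}`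
Golay array triad, then `ψ₁,₂(A), ψ₁,₂(B), ψ₁,₂(C)` form a 3-phase
`s₁s₂ × s₃ × ⋯ × s_{r+2}` Golay array triad. -/


theorem proj12_golay_triad (s₁ s₂ : ℕ) (r : ℕ) (s : Fin r → ℕ)
    (A B C : ℤ → ℤ → (Fin r → ℤ) → ℂ) (h : GolayTriad2R s₁ s₂ s A B C) :
    GolayTriad1R (s₁ * s₂) s (proj12 s₁ s₂ A) (proj12 s₁ s₂ B) (proj12 s₁ s₂ C) := by
  obtain ⟨hA, hB, hC, hcorr⟩ := h
  refine ⟨proj12_threePhase s₁ s₂ hA, proj12_threePhase s₁ s₂ hB,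
    proj12_threePhase s₁ s₂ hC, ?_⟩
  by_cases hs : s₁ = 0 ∨ s₂ = 0
  · have hz : ∀ X : ℤ → ℤ → (Fin r → ℤ) → ℂ, proj12 s₁ s₂ X = fun _ _ => (0 : ℂ) := by
      intro X
      funext j i
      unfold proj12
      rw [if_neg]
      rintro ⟨h0, h1⟩
      rcases hs with hh | hh <;> rw [hh] at h1 <;> push_cast at h1 <;> omega
    intro u₀ u _
    simp [aperCorr1R, hz A, hz B, hz C]
  · push_neg at hs
    have hs₁ : 0 < (s₁ : ℤ) := by exact_mod_cast Nat.pos_of_ne_zero hs.1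
    intro u₀ u hu
    rw [corr_decomp s₁ s₂ hs₁ hA.1 u₀ u, corr_decomp s₁ s₂ hs₁ hB.1 u₀ u,
      corr_decomp s₁ s₂ hs₁ hC.1 u₀ u]
    have h1 := hcorr (u₀ % (s₁:ℤ)) (u₀ / (s₁:ℤ)) u (by
      rintro ⟨ha0, hb0, hu0⟩
      apply hu
      refine ⟨?_, hu0⟩
      have := Int.mul_ediv_add_emod u₀ (s₁:ℤ)
      rw [ha0, hb0] at this
      linarith)
    have h2 := hcorr (u₀ % (s₁:ℤ) - (s₁:ℤ)) (u₀ / (s₁:ℤ) + 1) u (by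
      rintro ⟨ha0, _, _⟩
      have := Int.emod_lt_of_pos u₀ hs₁
      linarith)
    linear_combination h1 + h2
end

section
/- Suppose there exists a 3-phase s₁ × ⋯ × s_r Golay array triad. Then there exists a 3-phase Golay sequence triad of length ∏_{k=1}^{r} s_k. -/
open scoped BigOperators

/-- A 3-phase `s₁ × ⋯ × s_r` array: vanishes whenever some index is out of
range, and its entries inside the index range lie in `{1, ω, ω²}`. -/
def IsThreePhaseArr (r : ℕ) (s : Fin r → ℕ) (A : (Fin r → ℤ) → ℂ) : Prop :=
  (∀ i : Fin r → ℤ, (∃ k, i k < 0 ∨ (s k : ℤ) ≤ i k) → A i = 0) ∧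
    ∀ i : Fin r → ℤ, (∀ k, 0 ≤ i k ∧ i k < (s k : ℤ)) →
      A i ∈ ({1, ω, ω ^ 2} : Set ℂ)

/-- Three 3-phase `s₁ × ⋯ × s_r` arrays forming a 3-phase Golay array triad. -/
def GolayArrTriad (r : ℕ) (s : Fin r → ℕ) (A B C : (Fin r → ℤ) → ℂ) : Prop :=
  IsThreePhaseArr r s A ∧ IsThreePhaseArr r s B ∧ IsThreePhaseArr r s C ∧
    ∀ u : Fin r → ℤ, u ≠ 0 →
      aperCorrArr A u + aperCorrArr B u + aperCorrArr C u = 0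

namespace GolayAux

variable {r : ℕ} (s : Fin r → ℕ)

/-- Mixed-radix linear functional `φ(v) = ∑ₖ vₖ · ∏_{j<k} s_j`. -/
def phi (v : Fin r → ℤ) : ℤ :=
  ∑ k, v k * ∏ j : Fin k.val, (s (Fin.castLE k.isLt.le j) : ℤ)

/-- The index box `[0, s₀) × ⋯ × [0, s_{r-1})`. -/
noncomputable def Box : Finset (Fin r → ℤ) := Fintype.piFinset fun k => Finset.Ico 0 (s k : ℤ)

/-- The difference box `(-s₀, s₀) × ⋯`. -/
noncomputable def DBox : Finset (Fin r → ℤ) := Fintype.piFinset fun k => Finset.Ioo (-(s k : ℤ)) (s k : ℤ)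

lemma mem_Box {i : Fin r → ℤ} : i ∈ Box s ↔ ∀ k, 0 ≤ i k ∧ i k < (s k : ℤ) := by
  simp [Box, Fintype.mem_piFinset, Finset.mem_Ico]

lemma mem_DBox {i : Fin r → ℤ} :
    i ∈ DBox s ↔ ∀ k, -(s k : ℤ) < i k ∧ i k < (s k : ℤ) := by
  simp [DBox, Fintype.mem_piFinset, Finset.mem_Ioo]

lemma phi_sub (a b : Fin r → ℤ) : phi s (a - b) = phi s a - phi s b := by
  simp [phi, sub_mul, Finset.sum_sub_distrib]

lemma phi_zero : phi s 0 = 0 := by simp [phi]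

lemma phi_cast (f : ∀ k, Fin (s k)) :
    phi s (fun k => ((f k : ℕ) : ℤ)) = ((finPiFinEquiv f : ℕ) : ℤ) := by
  rw [finPiFinEquiv_apply]
  push_cast
  rfl

lemma exists_fin_rep {i : Fin r → ℤ} (hi : i ∈ Box s) :
    ∃ f : ∀ k, Fin (s k), (fun k => ((f k : ℕ) : ℤ)) = i := by
  rw [mem_Box] at hi
  refine ⟨fun k => ⟨(i k).toNat, ?_⟩, funext fun k => ?_⟩
  · have h1 := (hi k).1; have h2 := (hi k).2; omega
  · exact Int.toNat_of_nonneg (hi k).1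

lemma phi_mem_of_box {i : Fin r → ℤ} (hi : i ∈ Box s) :
    0 ≤ phi s i ∧ phi s i < ((∏ k, s k : ℕ) : ℤ) := by
  obtain ⟨f, hf⟩ := exists_fin_rep s hi
  have h := phi_cast s f
  rw [hf] at h
  rw [h]
  constructor
  · exact_mod_cast Nat.zero_le _
  · exact_mod_cast (finPiFinEquiv f).isLt

lemma phi_injOn {i j : Fin r → ℤ} (hi : i ∈ Box s) (hj : j ∈ Box s)
    (hp : phi s i = phi s j) : i = j := by
  obtain ⟨f, hf⟩ := exists_fin_rep s hi
  obtain ⟨g, hg⟩ := exists_fin_rep s hj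
  have hfi := phi_cast s f; rw [hf] at hfi
  have hgj := phi_cast s g; rw [hg] at hgj
  have : ((finPiFinEquiv f : ℕ) : ℤ) = ((finPiFinEquiv g : ℕ) : ℤ) := by
    rw [← hfi, ← hgj, hp]
  have : finPiFinEquiv f = finPiFinEquiv g := Fin.ext (by exact_mod_cast this)
  have : f = g := finPiFinEquiv.injective this
  rw [← hf, ← hg, this]

lemma phi_surj {n : ℤ} (h0 : 0 ≤ n) (hN : n < ((∏ k, s k : ℕ) : ℤ)) :
    ∃ i ∈ Box s, phi s i = n := by
  have hlt : n.toNat < ∏ k, s k := by omega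
  set m : Fin (∏ k, s k) := ⟨n.toNat, hlt⟩ with hm
  set f := finPiFinEquiv.symm m with hfdef
  refine ⟨fun k => ((f k : ℕ) : ℤ), ?_, ?_⟩
  · rw [mem_Box]
    intro k
    exact ⟨Int.ofNat_nonneg _, by exact_mod_cast (f k).isLt⟩
  · rw [phi_cast s f, hfdef, Equiv.apply_symm_apply, hm]
    simp [Int.toNat_of_nonneg h0]

/-- The sequence obtained from an array by mixed-radix projection. -/
noncomputable def seqOf (A : (Fin r → ℤ) → ℂ) : ℤ → ℂ :=
  fun n => ∑ i ∈ (Box s).filter (fun i => phi s i = n), A i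

lemma seqOf_eq_zero (A : (Fin r → ℤ) → ℂ) {n : ℤ}
    (hn : n < 0 ∨ ((∏ k, s k : ℕ) : ℤ) ≤ n) : seqOf s A n = 0 := by
  have : (Box s).filter (fun i => phi s i = n) = ∅ :=
    Finset.filter_eq_empty_iff.mpr fun {i} hi hp => by
      have := phi_mem_of_box s hi; omega
  rw [seqOf, this, Finset.sum_empty]

lemma filter_phi_eq {i : Fin r → ℤ} (hi : i ∈ Box s) :
    (Box s).filter (fun j => phi s j = phi s i) = {i} := by
  ext j
  simp only [Finset.mem_filter, Finset.mem_singleton]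
  constructor
  · rintro ⟨hj, hp⟩; exact phi_injOn s hj hi hp
  · rintro rfl; exact ⟨hi, rfl⟩

lemma seqOf_phi (A : (Fin r → ℤ) → ℂ) {i : Fin r → ℤ} (hi : i ∈ Box s) :
    seqOf s A (phi s i) = A i := by
  rw [seqOf, filter_phi_eq s hi, Finset.sum_singleton]

lemma arr_zero_of_not_box {A : (Fin r → ℤ) → ℂ} (hA : IsThreePhaseArr r s A)
    {i : Fin r → ℤ} (hi : i ∉ Box s) : A i = 0 := by
  apply hA.1
  rw [mem_Box] at hi
  push_neg at hi
  obtain ⟨k, hk⟩ := hi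
  exact ⟨k, by omega⟩

lemma corrArr_eq {A : (Fin r → ℤ) → ℂ} (hA : IsThreePhaseArr r s A) (v : Fin r → ℤ) :
    aperCorrArr A v = ∑ i ∈ Box s, A i * (starRingEnd ℂ) (A (i + v)) :=
  tsum_eq_sum fun i hi => by rw [arr_zero_of_not_box s hA hi, zero_mul]

lemma corrSeq_eq (A : (Fin r → ℤ) → ℂ) (u : ℤ) :
    aperCorr (seqOf s A) u =
      ∑ n ∈ Finset.Ico (0 : ℤ) ((∏ k, s k : ℕ) : ℤ),
        seqOf s A n * (starRingEnd ℂ) (seqOf s A (n + u)) :=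
  tsum_eq_sum fun n hn => by
    rw [Finset.mem_Ico] at hn
    rw [seqOf_eq_zero s A (by omega), zero_mul]

/-- Key identity: the sequence autocorrelation is the sum of array
autocorrelations over all shifts projecting to `u`. -/
lemma corrSeq_key {A : (Fin r → ℤ) → ℂ} (hA : IsThreePhaseArr r s A) (u : ℤ) :
    aperCorr (seqOf s A) u =
      ∑ v ∈ (DBox s).filter (fun v => phi s v = u), aperCorrArr A v := by
  have conjA := starRingEnd ℂ
  have hL : aperCorr (seqOf s A) u =
      ∑ p ∈ Box s ×ˢ Box s,
        (if phi s p.2 = phi s p.1 + u then A p.1 * (starRingEnd ℂ) (A p.2) else 0) := by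
    rw [corrSeq_eq]
    rw [Finset.sum_product]
    calc ∑ n ∈ Finset.Ico (0 : ℤ) ((∏ k, s k : ℕ) : ℤ),
            seqOf s A n * (starRingEnd ℂ) (seqOf s A (n + u))
        = ∑ n ∈ Finset.Ico (0 : ℤ) ((∏ k, s k : ℕ) : ℤ), ∑ i ∈ Box s,
            (if phi s i = n then A i * (starRingEnd ℂ) (seqOf s A (n + u)) else 0) := by
          refine Finset.sum_congr rfl fun n _ => ?_
          rw [seqOf, Finset.sum_mul, Finset.sum_filter]
      _ = ∑ i ∈ Box s, ∑ n ∈ Finset.Ico (0 : ℤ) ((∏ k, s k : ℕ) : ℤ),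
            (if phi s i = n then A i * (starRingEnd ℂ) (seqOf s A (n + u)) else 0) :=
          Finset.sum_comm
      _ = ∑ i ∈ Box s, A i * (starRingEnd ℂ) (seqOf s A (phi s i + u)) := by
          refine Finset.sum_congr rfl fun i hi => ?_
          rw [Finset.sum_ite_eq (Finset.Ico (0 : ℤ) ((∏ k, s k : ℕ) : ℤ)) (phi s i)
            (fun n => A i * (starRingEnd ℂ) (seqOf s A (n + u)))]
          rw [if_pos (Finset.mem_Ico.mpr ⟨(phi_mem_of_box s hi).1, (phi_mem_of_box s hi).2⟩)]
      _ = ∑ i ∈ Box s, ∑ j ∈ Box s,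
            (if phi s j = phi s i + u then A i * (starRingEnd ℂ) (A j) else 0) := by
          refine Finset.sum_congr rfl fun i hi => ?_
          rw [seqOf, map_sum, Finset.mul_sum, Finset.sum_filter]
  have hR : (∑ v ∈ (DBox s).filter (fun v => phi s v = u), aperCorrArr A v) =
      ∑ q ∈ DBox s ×ˢ Box s,
        (if phi s q.1 = u then A q.2 * (starRingEnd ℂ) (A (q.2 + q.1)) else 0) := by
    rw [Finset.sum_product]
    rw [Finset.sum_filter]
    refine Finset.sum_congr rfl fun v _ => ?_
    split_ifs with hv
    · exact corrArr_eq s hA v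
    · simp
  rw [hL, hR]
  refine Finset.sum_bij_ne_zero (fun p _ _ => (p.2 - p.1, p.1)) ?_ ?_ ?_ ?_
  · rintro ⟨i, j⟩ h₁ h₂
    rw [Finset.mem_product] at h₁ ⊢
    obtain ⟨hi, hj⟩ := h₁
    rw [mem_Box] at hi hj
    constructor
    · rw [mem_DBox]
      intro k
      have h1 : 0 ≤ i k ∧ i k < (s k : ℤ) := hi k
      have h2 : 0 ≤ j k ∧ j k < (s k : ℤ) := hj k
      simp only [Pi.sub_apply]
      omega
    · rw [mem_Box]; exact hi
  · rintro ⟨i₁, j₁⟩ h₁₁ h₁₂ ⟨i₂, j₂⟩ h₂₁ h₂₂ heq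
    simp only [Prod.mk.injEq] at heq
    obtain ⟨h1, h2⟩ := heq
    have : j₁ = j₂ := by
      have := sub_eq_sub_iff_add_eq_add.mp h1
      rw [h2] at h1
      have := congrArg (· + i₂) h1
      simpa [sub_add_cancel] using this
    exact Prod.ext h2 this
  · rintro ⟨v, i⟩ hvi hne
    rw [Finset.mem_product] at hvi
    have hiv : i + v ∈ Box s := by
      by_contra hnb
      apply hne
      rw [arr_zero_of_not_box s hA hnb]
      simp
    have hphi : phi s v = u := by
      by_contra hc
      exact hne (if_neg hc)
    refine ⟨(i, i + v), ?_, ?_, ?_⟩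
    · rw [Finset.mem_product]; exact ⟨hvi.2, hiv⟩
    · have : phi s (i + v) = phi s i + u := by
        have := phi_sub s (i + v) i
        simp only [add_sub_cancel_left] at this
        omega
      rw [if_pos this]
      intro hz
      apply hne
      rw [if_pos hphi]
      exact hz
    · simp
  · rintro ⟨i, j⟩ h₁ h₂
    rw [Finset.mem_product] at h₁
    have hcond : phi s j = phi s i + u := by
      by_contra hc
      exact h₂ (if_neg hc)
    have hcond' : phi s (j - i) = u := by
      rw [phi_sub]; omega
    simp only
    rw [if_pos hcond, if_pos hcond']
    congr 1
    rw [add_sub_cancel]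

lemma threePhaseSeq_of {A : (Fin r → ℤ) → ℂ} (hA : IsThreePhaseArr r s A) :
    IsThreePhaseSeq (∏ k, s k) (seqOf s A) := by
  constructor
  · intro n hn
    exact seqOf_eq_zero s A hn
  · intro n h0 hN
    obtain ⟨i, hi, hphi⟩ := phi_surj s h0 hN
    rw [← hphi, seqOf_phi s A hi]
    exact hA.2 i ((mem_Box s).mp hi)

end GolayAux

/-- If there exists a 3-phase `s₁ × ⋯ × s_r` Golay array triad, then there
exists a 3-phase Golay sequence triad of length `∏ₖ s_k`. -/
theorem golay_array_triad_to_seq_triad (r : ℕ) (s : Fin r → ℕ)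
    (h : ∃ A B C : (Fin r → ℤ) → ℂ, GolayArrTriad r s A B C) :
    ∃ A B C : ℤ → ℂ, GolaySeqTriad (∏ k, s k) A B C := by
  obtain ⟨A, B, C, hA, hB, hC, htri⟩ := h
  refine ⟨GolayAux.seqOf s A, GolayAux.seqOf s B, GolayAux.seqOf s C,
    GolayAux.threePhaseSeq_of s hA, GolayAux.threePhaseSeq_of s hB,
    GolayAux.threePhaseSeq_of s hC, ?_⟩
  intro u hu
  rw [GolayAux.corrSeq_key s hA u, GolayAux.corrSeq_key s hB u,
    GolayAux.corrSeq_key s hC u, ← Finset.sum_add_distrib, ← Finset.sum_add_distrib]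
  refine Finset.sum_eq_zero fun v hv => ?_
  rw [Finset.mem_filter] at hv
  refine htri v fun hz => ?_
  rw [hz, GolayAux.phi_zero] at hv
  exact hu hv.2.symm
end

section
/- (Cross-correlation, 2 × s case.) Suppose that A₁, B₁, C₁ form a 3-phase length s Golay sequence triad, that A₃, B₃, C₃ form a 3-phase length s Golay sequence triad, and that for all integers u, C_{A₁,A₃}(u) + C_{B₁,B₃}(u) + C_{C₁,C₃}(u) = 0. Define the 2 × s arrays U, V, W by U(0,i) = A₁(i), U(1,i) = A₃(i); V(0,i) = B₁(i), V(1,i) = B₃(i); W(0,i) = C₁(i), W(1,i) = C₃(i) (with value 0 when the row index is not 0 or 1). Then U, V, W form a 3-phase 2 × s Golay array triad. -/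
open scoped BigOperators

/-- Aperiodic cross-correlation function
`C_{A,B}(u) = Σ_{i ∈ ℤ} A(i) conj(B(i+u))`. -/
noncomputable def crossCorr (A B : ℤ → ℂ) (u : ℤ) : ℂ :=
  ∑' i : ℤ, A i * (starRingEnd ℂ) (B (i + u))

/-- A 3-phase `s₁ × s₂` array: vanishes outside
`{0,…,s₁−1} × {0,…,s₂−1}` and takes values in `{1, ω, ω²}` on this index
set. -/
def IsThreePhaseArr2 (s₁ s₂ : ℕ) (D : ℤ → ℤ → ℂ) : Prop :=
  (∀ i₁ i₂ : ℤ, (i₁ < 0 ∨ (s₁ : ℤ) ≤ i₁) ∨ (i₂ < 0 ∨ (s₂ : ℤ) ≤ i₂) → D i₁ i₂ = 0) ∧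
    ∀ i₁ i₂ : ℤ, 0 ≤ i₁ → i₁ < (s₁ : ℤ) → 0 ≤ i₂ → i₂ < (s₂ : ℤ) →
      D i₁ i₂ ∈ ({1, ω, ω ^ 2} : Set ℂ)

/-- Aperiodic autocorrelation of a two-dimensional array. -/
noncomputable def aperCorr2 (D : ℤ → ℤ → ℂ) (u₁ u₂ : ℤ) : ℂ :=
  ∑' p : ℤ × ℤ, D p.1 p.2 * (starRingEnd ℂ) (D (p.1 + u₁) (p.2 + u₂))

/-- Three 3-phase `s₁ × s₂` arrays forming a 3-phase Golay array triad. -/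
def GolayArrTriad2 (s₁ s₂ : ℕ) (U V W : ℤ → ℤ → ℂ) : Prop :=
  IsThreePhaseArr2 s₁ s₂ U ∧ IsThreePhaseArr2 s₁ s₂ V ∧ IsThreePhaseArr2 s₁ s₂ W ∧
    ∀ u₁ u₂ : ℤ, ¬ (u₁ = 0 ∧ u₂ = 0) →
      aperCorr2 U u₁ u₂ + aperCorr2 V u₁ u₂ + aperCorr2 W u₁ u₂ = 0

/-- The `2 × s` array with rows `X` and `Y` (zero off rows `0` and `1`). -/
def rows2 (X Y : ℤ → ℂ) : ℤ → ℤ → ℂ :=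
  fun i₁ i => if i₁ = 0 then X i else if i₁ = 1 then Y i else 0

/-- The `3 × s` array with rows `X`, `Y`, `Z` (zero off rows `0`, `1`, `2`). -/
def rows3 (X Y Z : ℤ → ℂ) : ℤ → ℤ → ℂ :=
  fun i₁ i => if i₁ = 0 then X i else if i₁ = 1 then Y i else if i₁ = 2 then Z i else 0

section Aux

lemma tsum_len_eq (s : ℕ) (A : ℤ → ℂ) (hA : IsLenSeq s A) (g : ℤ → ℂ) :
    ∑' i : ℤ, A i * g i = ∑ i ∈ Finset.Ico (0:ℤ) (s:ℤ), A i * g i := by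
  refine tsum_eq_sum ?_
  intro i hi
  have : i < 0 ∨ (s:ℤ) ≤ i := by
    simp only [Finset.mem_Ico] at hi; omega
  rw [hA i this, zero_mul]

lemma aperCorr_eq (s : ℕ) (A : ℤ → ℂ) (hA : IsLenSeq s A) (u : ℤ) :
    aperCorr A u = ∑ i ∈ Finset.Ico (0:ℤ) (s:ℤ), A i * (starRingEnd ℂ) (A (i + u)) :=
  tsum_len_eq s A hA _

lemma crossCorr_eq (s : ℕ) (A B : ℤ → ℂ) (hA : IsLenSeq s A) (u : ℤ) :
    crossCorr A B u = ∑ i ∈ Finset.Ico (0:ℤ) (s:ℤ), A i * (starRingEnd ℂ) (B (i + u)) :=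
  tsum_len_eq s A hA _

lemma crossCorr_swap (s : ℕ) (X Y : ℤ → ℂ) (hX : IsLenSeq s X) (u : ℤ) :
    crossCorr Y X u = (starRingEnd ℂ) (crossCorr X Y (-u)) := by
  have hR : crossCorr X Y (-u) =
      ∑ i ∈ Finset.Ico (0:ℤ) (s:ℤ), X i * (starRingEnd ℂ) (Y (i + -u)) :=
    crossCorr_eq s X Y hX _
  have hL : crossCorr Y X u =
      ∑ i ∈ Finset.Ico (0:ℤ) (s:ℤ), Y (i - u) * (starRingEnd ℂ) (X i) := by
    unfold crossCorr
    rw [tsum_eq_sum (s := (Finset.Ico (0:ℤ) (s:ℤ)).map (Equiv.subRight u).toEmbedding)]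
    · rw [Finset.sum_map]
      refine Finset.sum_congr rfl fun i _ => ?_
      simp [Equiv.subRight, sub_add_cancel]
    · intro j hj
      have : j + u < 0 ∨ (s:ℤ) ≤ j + u := by
        simp only [Finset.mem_map, Finset.mem_Ico, Equiv.coe_toEmbedding,
          Equiv.subRight_apply] at hj
        by_contra hc
        push_neg at hc
        exact hj ⟨j + u, ⟨hc.1, hc.2⟩, by ring⟩
      rw [hX _ this, map_zero, mul_zero]
  rw [hL, hR, map_sum]
  refine Finset.sum_congr rfl fun i _ => ?_
  rw [map_mul, RingHomInvPair.comp_apply_eq₂]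
  rw [sub_eq_add_neg, mul_comm]

lemma rows2_ne (X Y : ℤ → ℂ) {a : ℤ} (h0 : a ≠ 0) (h1 : a ≠ 1) (i : ℤ) :
    rows2 X Y a i = 0 := by simp [rows2, h0, h1]

lemma aperCorr2_rows2 (s : ℕ) (X Y : ℤ → ℂ) (hX : IsLenSeq s X) (hY : IsLenSeq s Y)
    (u₁ u₂ : ℤ) :
    aperCorr2 (rows2 X Y) u₁ u₂ =
      if u₁ = 0 then aperCorr X u₂ + aperCorr Y u₂
      else if u₁ = 1 then crossCorr X Y u₂
      else if u₁ = -1 then crossCorr Y X u₂ else 0 := by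
  unfold aperCorr2
  rw [tsum_eq_sum (s := ({0, 1} : Finset ℤ) ×ˢ Finset.Ico (0:ℤ) (s:ℤ))]
  · rw [Finset.sum_product, Finset.sum_pair (by norm_num : (0:ℤ) ≠ 1)]
    have r0 : ∀ i, rows2 X Y 0 i = X i := fun i => by simp [rows2]
    have r1 : ∀ i, rows2 X Y 1 i = Y i := fun i => by simp [rows2]
    simp only [r0, r1]
    rcases eq_or_ne u₁ 0 with h0 | h0
    · subst h0
      simp only [if_pos rfl, zero_add, r0]
      have : (0:ℤ) + 1 = 1 := by norm_num
      rw [aperCorr_eq s X hX, aperCorr_eq s Y hY]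
      simp [r0, r1]
    · rcases eq_or_ne u₁ 1 with h1 | h1
      · subst h1
        rw [if_neg h0, if_pos rfl, crossCorr_eq s X Y hX]
        have e1 : ∀ i, rows2 X Y (1 : ℤ) i = Y i := r1
        have e2 : ∀ i : ℤ, rows2 X Y (2 : ℤ) i = 0 :=
          rows2_ne X Y (by norm_num) (by norm_num)
        norm_num [e1, e2]
      · rcases eq_or_ne u₁ (-1) with hm | hm
        · subst hm
          rw [if_neg h0, if_neg h1, if_pos rfl, crossCorr_eq s Y X hY]
          have e1 : ∀ i : ℤ, rows2 X Y (-1 : ℤ) i = 0 :=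
            rows2_ne X Y (by norm_num) (by norm_num)
          have e2 : ∀ i, rows2 X Y (0 : ℤ) i = X i := r0
          norm_num [e1, e2]
        · rw [if_neg h0, if_neg h1, if_neg hm]
          have e1 : ∀ i : ℤ, rows2 X Y u₁ i = 0 := rows2_ne X Y h0 h1
          have e2 : ∀ i : ℤ, rows2 X Y (1 + u₁) i = 0 :=
            rows2_ne X Y (by omega) (by omega)
          simp [e1, e2]
  · intro p hp
    simp only [Finset.mem_product, Finset.mem_insert, Finset.mem_singleton,
      Finset.mem_Ico] at hp
    push_neg at hp
    by_cases h01 : p.1 = 0 ∨ p.1 = 1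
    · have hcol : p.2 < 0 ∨ (s:ℤ) ≤ p.2 := by
        rcases h01 with h | h <;> [skip; skip] <;> omega
      have : rows2 X Y p.1 p.2 = 0 := by
        unfold rows2
        split_ifs <;> simp [hX _ hcol, hY _ hcol]
      rw [this, zero_mul]
    · push_neg at h01
      rw [rows2_ne X Y h01.1 h01.2, zero_mul]

lemma threePhase_rows2 (s : ℕ) (X Y : ℤ → ℂ)
    (hX : IsThreePhaseSeq s X) (hY : IsThreePhaseSeq s Y) :
    IsThreePhaseArr2 2 s (rows2 X Y) := by
  constructor
  · intro i₁ i₂ h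
    rcases h with hrow | hcol
    · exact rows2_ne X Y (by omega) (by omega) i₂
    · unfold rows2
      split_ifs <;> simp [hX.1 _ hcol, hY.1 _ hcol]
  · intro i₁ i₂ h0 h2 hc0 hcs
    have : i₁ = 0 ∨ i₁ = 1 := by omega
    rcases this with h | h <;> subst h
    · simpa [rows2] using hX.2 i₂ hc0 hcs
    · simpa [rows2] using hY.2 i₂ hc0 hcs

end Aux

/-- (Cross-correlation, `2 × s` case.) If `A₁, B₁, C₁` and `A₃, B₃, C₃` are
3-phase length-`s` Golay sequence triads with
`C_{A₁,A₃}(u) + C_{B₁,B₃}(u) + C_{C₁,C₃}(u) = 0` for all `u`, then stacking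
them row-wise gives a 3-phase `2 × s` Golay array triad. -/


theorem cross_correlation_two_by_s (s : ℕ) (A₁ B₁ C₁ A₃ B₃ C₃ : ℤ → ℂ)
    (h1 : GolaySeqTriad s A₁ B₁ C₁) (h3 : GolaySeqTriad s A₃ B₃ C₃)
    (hcc : ∀ u : ℤ,
      crossCorr A₁ A₃ u + crossCorr B₁ B₃ u + crossCorr C₁ C₃ u = 0) :
    GolayArrTriad2 2 s (rows2 A₁ A₃) (rows2 B₁ B₃) (rows2 C₁ C₃) := by
  obtain ⟨hA1, hB1, hC1, hcorr1⟩ := h1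
  obtain ⟨hA3, hB3, hC3, hcorr3⟩ := h3
  refine ⟨threePhase_rows2 s A₁ A₃ hA1 hA3, threePhase_rows2 s B₁ B₃ hB1 hB3,
    threePhase_rows2 s C₁ C₃ hC1 hC3, ?_⟩
  intro u₁ u₂ h
  rw [aperCorr2_rows2 s A₁ A₃ hA1.1 hA3.1, aperCorr2_rows2 s B₁ B₃ hB1.1 hB3.1,
    aperCorr2_rows2 s C₁ C₃ hC1.1 hC3.1]
  rcases eq_or_ne u₁ 0 with h0 | h0
  · subst h0
    have hu₂ : u₂ ≠ 0 := fun hu => h ⟨rfl, hu⟩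
    norm_num
    have e1 := hcorr1 u₂ hu₂
    have e3 := hcorr3 u₂ hu₂
    linear_combination e1 + e3
  · rcases eq_or_ne u₁ 1 with h1 | h1
    · subst h1
      norm_num
      exact hcc u₂
    · rcases eq_or_ne u₁ (-1) with hm | hm
      · subst hm
        norm_num
        rw [crossCorr_swap s A₁ A₃ hA1.1, crossCorr_swap s B₁ B₃ hB1.1,
          crossCorr_swap s C₁ C₃ hC1.1, ← map_add, ← map_add, hcc (-u₂), map_zero]
      · simp only [if_neg h0, if_neg h1, if_neg hm]
        ring
end
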